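/- If p is a prime with p ≠ 5 and p ≡ 1 (mod 24) or p ≡ 5 (mod 24), then there exists n in ZMod p such that n, n+1, and n+2 are all nonzero squares in ZMod p. -/

import Mathlib

lemma mul_nonsquare_nonsquare {F : Type*} [Field F] [Fintype F] [DecidableEq F]
    {a b : F} (ha : ¬IsSquare a) (hb : ¬IsSquare b) : IsSquare (a * b) := by
  have ha0 : a ≠ 0 := fun h => ha (h ▸ IsSquare.zero)
  have hb0 : b ≠ 0 := fun h => hb (h ▸ IsSquare.zero)
  have h1 := quadraticChar_neg_one_iff_not_isSquare.mpr ha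
  have h2 := quadraticChar_neg_one_iff_not_isSquare.mpr hb
  have hab : quadraticChar F (a * b) = 1 := by rw [map_mul, h1, h2]; ring
  exact (quadraticChar_one_iff_isSquare (mul_ne_zero ha0 hb0)).mp hab

theorem consecutive_qr_of_one_or_five_mod_twentyfour (p : ℕ) (hp : p.Prime)
    (hp5 : p ≠ 5) (hmod : p % 24 = 1 ∨ p % 24 = 5) :
    ∃ n : ZMod p, (n ≠ 0 ∧ IsSquare n) ∧ (n + 1 ≠ 0 ∧ IsSquare (n + 1)) ∧
      (n + 2 ≠ 0 ∧ IsSquare (n + 2)) := by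
  haveI : Fact p.Prime := ⟨hp⟩
  have hp1 : p ≠ 1 := hp.one_lt.ne'
  have hplarge : 25 ≤ p := by omega
  have hne : ∀ k : ℕ, 0 < k → k < p → (k : ZMod p) ≠ 0 := by
    intro k hk hkp h
    rw [ZMod.natCast_eq_zero_iff] at h
    have := Nat.le_of_dvd hk h
    omega
  have h4mod : p % 4 = 1 := by omega
  -- quadratic residuosity of 3 via reciprocity
  have h3iff : IsSquare ((3 : ℕ) : ZMod p) ↔ IsSquare ((p : ℕ) : ZMod 3) :=
    ZMod.exists_sq_eq_prime_iff_of_mod_four_eq_one h4mod (by norm_num)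
  have hp3 : ((p : ℕ) : ZMod 3) = ((p % 3 : ℕ) : ZMod 3) := (ZMod.natCast_mod p 3).symm
  rcases hmod with h24 | h24
  · -- p ≡ 1 (mod 24): use n = 1
    have hs2 : IsSquare (2 : ZMod p) :=
      (ZMod.exists_sq_eq_two_iff (by omega)).mpr (Or.inl (by omega))
    have hs3 : IsSquare (3 : ZMod p) := by
      have : IsSquare ((p : ℕ) : ZMod 3) := by
        rw [hp3, (by omega : p % 3 = 1)]
        exact IsSquare.one
      have h3 := h3iff.mpr this
      exact_mod_cast h3
    refine ⟨1, ⟨?_, IsSquare.one⟩, ⟨?_, ?_⟩, ⟨?_, ?_⟩⟩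
    · exact_mod_cast hne 1 (by norm_num) (by omega)
    · have := hne 2 (by norm_num) (by omega)
      rw [show ((1 : ZMod p) + 1) = ((2 : ℕ) : ZMod p) by push_cast; ring]
      exact this
    · rw [show ((1 : ZMod p) + 1) = 2 by ring]; exact hs2
    · have := hne 3 (by norm_num) (by omega)
      rw [show ((1 : ZMod p) + 2) = ((3 : ℕ) : ZMod p) by push_cast; ring]
      exact this
    · rw [show ((1 : ZMod p) + 2) = 3 by ring]; exact hs3
  · -- p ≡ 5 (mod 24): 2 and 3 are nonsquares
    have hplarge' : 29 ≤ p := by omega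
    have hn2 : ¬IsSquare (2 : ZMod p) := by
      intro h
      rcases (ZMod.exists_sq_eq_two_iff (by omega)).mp h with h8 | h8 <;> omega
    have hn3 : ¬IsSquare (3 : ZMod p) := by
      intro h
      have h' : IsSquare ((3 : ℕ) : ZMod p) := by exact_mod_cast h
      have := h3iff.mp h'
      rw [hp3, (by omega : p % 3 = 2)] at this
      revert this
      decide
    have hs6 : IsSquare (6 : ZMod p) := by
      have := mul_nonsquare_nonsquare hn2 hn3
      rwa [show (2 : ZMod p) * 3 = 6 by ring] at this
    have hnz : ∀ k : ℕ, 0 < k → k < p → ((k : ℕ) : ZMod p) ≠ 0 := hne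
    by_cases hs5 : IsSquare (5 : ZMod p)
    · -- n = 4 : 4, 5, 6 are all squares
      refine ⟨4, ⟨?_, ⟨2, by norm_num⟩⟩, ⟨?_, ?_⟩, ⟨?_, ?_⟩⟩
      · have := hne 4 (by norm_num) (by omega)
        exact_mod_cast this
      · have := hne 5 (by norm_num) (by omega)
        rw [show ((4 : ZMod p) + 1) = ((5 : ℕ) : ZMod p) by push_cast; ring]
        exact this
      · rw [show ((4 : ZMod p) + 1) = 5 by ring]; exact hs5
      · have := hne 6 (by norm_num) (by omega)
        rw [show ((4 : ZMod p) + 2) = ((6 : ℕ) : ZMod p) by push_cast; ring]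
        exact this
      · rw [show ((4 : ZMod p) + 2) = 6 by ring]; exact hs6
    · -- n = 4/6 : terms are 4/6, 10/6, 16/6
      have hs10 : IsSquare (10 : ZMod p) := by
        have := mul_nonsquare_nonsquare hn2 hs5
        rwa [show (2 : ZMod p) * 5 = 10 by ring] at this
      have h6ne : (6 : ZMod p) ≠ 0 := by
        have := hne 6 (by norm_num) (by omega)
        exact_mod_cast this
      have h4ne : (4 : ZMod p) ≠ 0 := by
        have := hne 4 (by norm_num) (by omega)
        exact_mod_cast this
      have h10ne : (10 : ZMod p) ≠ 0 := by
        have := hne 10 (by norm_num) (by omega)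
        exact_mod_cast this
      have h16ne : (16 : ZMod p) ≠ 0 := by
        have := hne 16 (by norm_num) (by omega)
        exact_mod_cast this
      have hinv6 : IsSquare ((6 : ZMod p)⁻¹) := hs6.inv
      have hinv6ne : ((6 : ZMod p)⁻¹) ≠ 0 := inv_ne_zero h6ne
      refine ⟨4 * (6 : ZMod p)⁻¹, ⟨mul_ne_zero h4ne hinv6ne, IsSquare.mul (show IsSquare (4 : ZMod p) from ⟨2, by norm_num⟩) hinv6⟩, ⟨?_, ?_⟩, ⟨?_, ?_⟩⟩
      · rw [show (4 : ZMod p) * (6 : ZMod p)⁻¹ + 1 = 10 * (6 : ZMod p)⁻¹ by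
          field_simp; ring]
        exact mul_ne_zero h10ne hinv6ne
      · rw [show (4 : ZMod p) * (6 : ZMod p)⁻¹ + 1 = 10 * (6 : ZMod p)⁻¹ by
          field_simp; ring]
        exact hs10.mul hinv6
      · rw [show (4 : ZMod p) * (6 : ZMod p)⁻¹ + 2 = 16 * (6 : ZMod p)⁻¹ by
          field_simp; ring]
        exact mul_ne_zero h16ne hinv6ne
      · rw [show (4 : ZMod p) * (6 : ZMod p)⁻¹ + 2 = 16 * (6 : ZMod p)⁻¹ by
          field_simp; ring]
        exact IsSquare.mul (show IsSquare (16 : ZMod p) from ⟨4, by norm_num⟩) hinv6
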